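/- Let M ⊆ ℕ₀ and let ℱ ⊆ ⋃_{m ∈ M} ℕ^{(m)} be an M-complex. Let (w_m)_{m ∈ M} be reals with w_m ≥ w_{m'} whenever m ≤ m'. Then ∑_{m ∈ M} w_m·|ℱ ∩ ℕ^{(m)}| ≥ ∑_{m ∈ M} w_m·|ℛ_M(|ℱ|) ∩ ℕ^{(m)}|. -/

import Mathlib

/-- The colex value of a finite set of naturals: sets of naturals, ordered by
colexicographic order, correspond to natural numbers via binary expansion. -/
def colexVal (A : Finset ℕ) : ℕ := ∑ i ∈ A, 2 ^ i

open Finset Colex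

lemma colexVal_lt_iff {A B : Finset ℕ} : colexVal A < colexVal B ↔ toColex A < toColex B :=
  Finset.geomSum_lt_geomSum_iff_toColex_lt_toColex le_rfl

lemma colexVal_injective : Function.Injective colexVal :=
  fun _ _ h => Finset.geomSum_injective le_rfl h

/-- The fill lemma: a small set below `A` in colex extends to a `q`-set still `≤ A`. -/
lemma fill_lemma {D A : Finset ℕ} {q : ℕ} (hval : toColex D < toColex A)
    (hd : D.card ≤ q) (hq : q ≤ A.card) :
    ∃ B : Finset ℕ, D ⊆ B ∧ B.card = q ∧ toColex B ≤ toColex A := by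
  have hP : ∃ j, q ≤ (D ∪ Finset.range j).card :=
    ⟨q, le_trans (by simp) (card_le_card subset_union_right)⟩
  classical
  set j := Nat.find hP with hj
  set B := D ∪ Finset.range j with hB
  have hqB : q ≤ B.card := Nat.find_spec hP
  have hcardB : B.card = q := by
    refine le_antisymm ?_ hqB
    rcases Nat.eq_zero_or_pos j with h0 | hpos
    · rw [hB, h0]; simpa using hd
    · have hlt : ¬ q ≤ (D ∪ Finset.range (j - 1)).card := Nat.find_min hP (by omega)
      have hsub : B ⊆ insert (j - 1) (D ∪ Finset.range (j - 1)) := by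
        intro a ha
        rw [hB, mem_union] at ha
        rcases ha with h | h
        · exact mem_insert_of_mem (mem_union_left _ h)
        · rw [mem_range] at h
          by_cases he : a = j - 1
          · rw [he]; exact mem_insert_self _ _
          · exact mem_insert_of_mem (mem_union_right _ (mem_range.mpr (by omega)))
      have := card_le_card hsub
      have := card_insert_le (j - 1) (D ∪ Finset.range (j - 1))
      omega
  obtain ⟨x, hxAD, hfilter⟩ := lt_iff_exists_filter_lt.mp hval
  rw [mem_sdiff] at hxAD
  obtain ⟨hxA, hxD⟩ := hxAD
  have hfcard : (D.filter (fun a => x < a)).card = (A.filter (fun a => x < a)).card := by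
    rw [hfilter]
  -- j ≤ x + 1
  have hjx : j ≤ x + 1 := by
    rw [hj]
    apply Nat.find_le
    have hsplit : D ∪ Finset.range (x + 1) = Finset.range (x+1) ∪ D.filter (fun a => x < a) := by
      ext a
      simp only [mem_union, mem_filter, mem_range]
      constructor
      · rintro (h | h)
        · by_cases hax : a < x + 1
          · exact Or.inl hax
          · exact Or.inr ⟨h, by omega⟩
        · exact Or.inl h
      · rintro (h | ⟨h, _⟩)
        · exact Or.inr h
        · exact Or.inl h
    have hdisj : Disjoint (Finset.range (x+1)) (D.filter (fun a => x < a)) := by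
      rw [disjoint_left]
      intro a ha ha'
      rw [mem_range] at ha
      have := (mem_filter.mp ha').2
      omega
    have hcardsplit : (D ∪ Finset.range (x + 1)).card
        = (x + 1) + (D.filter (fun a => x < a)).card := by
      rw [hsplit, card_union_of_disjoint hdisj, card_range]
    have hA' : A.card ≤ (x + 1) + (A.filter (fun a => x < a)).card := by
      have hsplitA : A = A.filter (fun a => a ≤ x) ∪ A.filter (fun a => x < a) := by
        ext a
        simp only [mem_union, mem_filter]
        by_cases h : a ∈ A <;> simp [h] <;> omega
      have h1 : (A.filter (fun a => a ≤ x)).card ≤ x + 1 := by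
        have : A.filter (fun a => a ≤ x) ⊆ Finset.range (x+1) := by
          intro a ha; rw [mem_range]; have := (mem_filter.mp ha).2; omega
        simpa using card_le_card this
      calc A.card = (A.filter (fun a => a ≤ x) ∪ A.filter (fun a => x < a)).card := by
            rw [← hsplitA]
        _ ≤ (A.filter (fun a => a ≤ x)).card + (A.filter (fun a => x < a)).card :=
            card_union_le _ _
        _ ≤ (x + 1) + (A.filter (fun a => x < a)).card := by omega
    calc q ≤ A.card := hq
      _ ≤ (x + 1) + (A.filter (fun a => x < a)).card := hA'
      _ = (x + 1) + (D.filter (fun a => x < a)).card := by rw [hfcard]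
      _ = (D ∪ Finset.range (x + 1)).card := hcardsplit.symm
  by_cases hxB : x ∈ B
  · -- B = A
    have hxj : x < j := by
      rcases mem_union.mp hxB with h | h
      · exact absurd h hxD
      · exact mem_range.mp h
    have hAB : A ⊆ B := by
      intro a ha
      by_cases hax : a ≤ x
      · exact mem_union_right _ (mem_range.mpr (by omega))
      · have : a ∈ A.filter (fun b => x < b) := mem_filter.mpr ⟨ha, by omega⟩
        rw [← hfilter] at this
        exact mem_union_left _ (mem_filter.mp this).1
    have : B = A := (eq_of_subset_of_card_le hAB (by omega)).symm
    exact ⟨B, subset_union_left, hcardB, le_of_eq (by rw [this])⟩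
  · refine ⟨B, subset_union_left, hcardB, le_of_lt ?_⟩
    rw [lt_iff_exists_filter_lt]
    refine ⟨x, mem_sdiff.mpr ⟨hxA, hxB⟩, ?_⟩
    have : B.filter (fun a => x < a) = D.filter (fun a => x < a) := by
      ext a
      simp only [hB, mem_filter, mem_union, mem_range]
      constructor
      · rintro ⟨h | h, hx⟩
        · exact ⟨h, hx⟩
        · omega
      · rintro ⟨h, hx⟩; exact ⟨Or.inl h, hx⟩
    rw [this, hfilter]

attribute [-instance] instDecidableEqFin

/-- biUnion of powersetCard equals iterated shadow for a sized family. -/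
lemma biUnion_powersetCard_eq_shadow {α : Type*} [DecidableEq α] (𝒜 : Finset (Finset α))
    {q d : ℕ} (h : ∀ A ∈ 𝒜, A.card = q) (hdq : d ≤ q) :
    𝒜.biUnion (fun B => B.powersetCard d) = Finset.shadow^[q - d] 𝒜 := by
  ext X
  rw [mem_biUnion, Finset.mem_shadow_iterate_iff_exists_sdiff]
  constructor
  · rintro ⟨A, hA, hX⟩
    rw [mem_powersetCard] at hX
    refine ⟨A, hA, hX.1, ?_⟩
    rw [card_sdiff_of_subset hX.1, h A hA, hX.2]
  · rintro ⟨A, hA, hXA, hcard⟩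
    refine ⟨A, hA, mem_powersetCard.mpr ⟨hXA, ?_⟩⟩
    have h1 := card_sdiff_of_subset hXA
    have h2 := card_le_card hXA
    rw [h A hA] at h1 h2
    omega

/-- Kruskal–Katona over ℕ, one source layer `q`, one target layer `d`. -/
lemma kk_layer {q d : ℕ} (hdq : d ≤ q) (𝒜 𝒞 : Finset (Finset ℕ))
    (h𝒜 : ∀ A ∈ 𝒜, A.card = q) (h𝒞 : ∀ A ∈ 𝒞, A.card = q)
    (hinit : ∀ A ∈ 𝒞, ∀ B : Finset ℕ, B.card = q → toColex B < toColex A → B ∈ 𝒞)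
    (hcard : 𝒞.card ≤ 𝒜.card) :
    (𝒞.biUnion fun B => B.powersetCard d).card ≤ (𝒜.biUnion fun B => B.powersetCard d).card := by
  classical
  set n := ((𝒜 ∪ 𝒞).sup fun A => A.sup id) + 1 with hn
  have hbound : ∀ A ∈ 𝒜 ∪ 𝒞, ∀ a ∈ A, a < n := by
    intro A hA a ha
    have : A.sup id ≤ (𝒜 ∪ 𝒞).sup (fun A => A.sup id) := le_sup hA
    have : a ≤ A.sup id := le_sup (f := id) ha
    omega
  set emb : Fin n ↪ ℕ := ⟨Fin.val, Fin.val_injective⟩ with hemb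
  set f : Finset ℕ → Finset (Fin n) := fun A => Finset.univ.filter fun i => (i : ℕ) ∈ A with hf
  have map_f : ∀ {A : Finset ℕ}, (∀ a ∈ A, a < n) → (f A).map emb = A := by
    intro A hA
    ext a
    simp only [hf, mem_map, mem_filter, mem_univ, true_and, hemb, Function.Embedding.coeFn_mk]
    constructor
    · rintro ⟨i, hi, rfl⟩; exact hi
    · intro ha; exact ⟨⟨a, hA a ha⟩, ha, rfl⟩
  have f_map : ∀ S : Finset (Fin n), f (S.map emb) = S := by
    intro S
    ext i
    simp only [hf, mem_filter, mem_univ, true_and, mem_map, hemb, Function.Embedding.coeFn_mk]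
    constructor
    · rintro ⟨j, hj, hji⟩; rwa [← Fin.val_injective hji]
    · intro hi; exact ⟨i, hi, rfl⟩
  have fsub : ∀ {X A : Finset ℕ}, X ⊆ A → f X ⊆ f A := by
    intro X A hXA i hi
    rw [hf, mem_filter] at hi ⊢
    exact ⟨hi.1, hXA hi.2⟩
  have card_f : ∀ {A : Finset ℕ}, (∀ a ∈ A, a < n) → (f A).card = A.card := by
    intro A hA
    conv_rhs => rw [← map_f hA]
    rw [card_map]
  set 𝒜' := 𝒜.image f with h𝒜'
  set 𝒞' := 𝒞.image f with h𝒞'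
  have inj𝒜 : Set.InjOn f 𝒜 := by
    intro X hX Y hY hXY
    rw [← map_f (hbound X (mem_union_left _ hX)), ← map_f (hbound Y (mem_union_left _ hY)), hXY]
  have inj𝒞 : Set.InjOn f 𝒞 := by
    intro X hX Y hY hXY
    rw [← map_f (hbound X (mem_union_right _ hX)), ← map_f (hbound Y (mem_union_right _ hY)), hXY]
  -- the set equality for biUnions
  have keyeq : ∀ (𝒮 : Finset (Finset ℕ)), (∀ A ∈ 𝒮, ∀ a ∈ A, a < n) →
      (𝒮.biUnion fun B => B.powersetCard d)
        = ((𝒮.image f).biUnion fun B => B.powersetCard d).image (fun S => S.map emb) := by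
    intro 𝒮 h𝒮
    ext X
    simp only [mem_image, mem_biUnion, mem_powersetCard]
    constructor
    · rintro ⟨A, hA, hXA, hXd⟩
      refine ⟨f X, ⟨f A, ⟨A, hA, rfl⟩, fsub hXA, ?_⟩, map_f fun a ha => h𝒮 A hA a (hXA ha)⟩
      exact (card_f fun a ha => h𝒮 A hA a (hXA ha)).trans hXd
    · rintro ⟨S, ⟨A', ⟨A, hA, rfl⟩, hSA, hSd⟩, rfl⟩
      refine ⟨A, hA, ?_, by rw [card_map, hSd]⟩
      calc S.map emb ⊆ (f A).map emb := map_subset_map.mpr hSA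
        _ = A := map_f (h𝒮 A hA)
  have card𝒜eq : (𝒜.biUnion fun B => B.powersetCard d).card
      = ((𝒜'.biUnion fun B => B.powersetCard d)).card := by
    rw [keyeq 𝒜 (fun A hA => hbound A (mem_union_left _ hA)), h𝒜']
    exact card_image_of_injective _ (Finset.map_injective emb)
  have card𝒞eq : (𝒞.biUnion fun B => B.powersetCard d).card
      = ((𝒞'.biUnion fun B => B.powersetCard d)).card := by
    rw [keyeq 𝒞 (fun A hA => hbound A (mem_union_right _ hA)), h𝒞']
    exact card_image_of_injective _ (Finset.map_injective emb)
  -- sizedness over Fin n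
  have h𝒜s : ∀ A' ∈ 𝒜', A'.card = q := by
    rintro A' hA'
    obtain ⟨A, hA, rfl⟩ := mem_image.mp hA'
    rw [card_f (hbound A (mem_union_left _ hA))]; exact h𝒜 A hA
  have h𝒞s : ∀ A' ∈ 𝒞', A'.card = q := by
    rintro A' hA'
    obtain ⟨A, hA, rfl⟩ := mem_image.mp hA'
    rw [card_f (hbound A (mem_union_right _ hA))]; exact h𝒞 A hA
  -- initial segment over Fin n
  have hinit' : IsInitSeg 𝒞' q := by
    constructor
    · intro A' hA'; exact h𝒞s A' hA'
    · rintro s t hs ⟨hts, htq⟩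
      obtain ⟨S, hS, rfl⟩ := mem_image.mp hs
      have hSn : ∀ a ∈ S, a < n := hbound S (mem_union_right _ hS)
      have htS : toColex (t.map emb) < toColex S := by
        rw [← map_f hSn]
        have h2 : (t.map emb) = t.image (fun i : Fin n => (i : ℕ)) := by
          rw [map_eq_image]; rfl
        have h3 : ((f S).map emb) = (f S).image (fun i : Fin n => (i : ℕ)) := by
          rw [map_eq_image]; rfl
        rw [h2, h3, Finset.Colex.toColex_image_lt_toColex_image Fin.val_strictMono]
        exact hts
      have hT : t.map emb ∈ 𝒞 := hinit S hS _ (by rw [card_map]; exact htq) htS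
      rw [mem_image]
      exact ⟨t.map emb, hT, f_map t⟩
  -- apply iterated KK
  have hsized : (𝒜' : Set (Finset (Fin n))).Sized q := fun A hA => h𝒜s A hA
  have hcard' : 𝒞'.card ≤ 𝒜'.card := by
    rw [h𝒜', h𝒞', card_image_of_injOn inj𝒞, card_image_of_injOn inj𝒜]
    exact hcard
  have := Finset.iterated_kk (k := q - d) hsized hcard' hinit'
  rw [card𝒜eq, card𝒞eq, biUnion_powersetCard_eq_shadow 𝒜' h𝒜s hdq,
    biUnion_powersetCard_eq_shadow 𝒞' h𝒞s hdq]
  exact this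

/-- There is a colex-minimal set with card in `M'` outside the finite family `R`. -/
lemma exists_min_outside (M' : Set ℕ) {m : ℕ} (hm : m ∈ M') (hm1 : 0 < m)
    (R : Finset (Finset ℕ)) :
    ∃ Astar : Finset ℕ, Astar.card ∈ M' ∧ Astar ∉ R ∧
      ∀ B : Finset ℕ, B.card ∈ M' → B ∉ R → colexVal Astar ≤ colexVal B := by
  classical
  have hex : ∃ A : Finset ℕ, A.card ∈ M' ∧ A ∉ R := by
    by_contra hcon
    push_neg at hcon
    have hinj : Function.Injective (fun c : ℕ => Finset.Ico c (c + m)) := by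
      intro c c' h
      have h' : Finset.Ico c (c + m) = Finset.Ico c' (c' + m) := h
      have h1 : c ∈ Finset.Ico c (c + m) := by simp; omega
      have h2 : c' ∈ Finset.Ico c' (c' + m) := by simp; omega
      rw [h'] at h1
      rw [← h'] at h2
      simp only [Finset.mem_Ico] at h1 h2
      omega
    have hsub : (Finset.range (R.card + 1)).image (fun c => Finset.Ico c (c + m)) ⊆ R := by
      intro X hX
      obtain ⟨c, _, rfl⟩ := mem_image.mp hX
      exact hcon _ (by rw [Nat.card_Ico]; simpa using hm)
    have := card_le_card hsub
    rw [card_image_of_injective _ hinj, card_range] at this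
    omega
  set V : Set ℕ := {v | ∃ A : Finset ℕ, A.card ∈ M' ∧ A ∉ R ∧ colexVal A = v} with hV
  have hVne : V.Nonempty := by
    obtain ⟨A, h1, h2⟩ := hex
    exact ⟨colexVal A, A, h1, h2, rfl⟩
  obtain ⟨A, h1, h2, h3⟩ := Nat.sInf_mem hVne
  refine ⟨A, h1, h2, fun B hB1 hB2 => ?_⟩
  rw [h3]
  exact Nat.sInf_le ⟨B, hB1, hB2, rfl⟩

/-- Key counting lemma: a complex has at least as many small sets as an initial segment
of no larger total size. -/
lemma key_lemma : ∀ (n : ℕ) (M : Set ℕ) (F R : Finset (Finset ℕ)) (t : ℕ),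
    (∀ A ∈ F, A.card ∈ M) →
    (∀ A : Finset ℕ, ∀ B ∈ F, A ⊆ B → A.card ∈ M → A ∈ F) →
    (∀ A ∈ R, A.card ∈ M) →
    (∀ A ∈ R, ∀ B : Finset ℕ, B.card ∈ M → colexVal B < colexVal A → B ∈ R) →
    R.card ≤ F.card →
    (∀ A ∈ F, A.card ≤ t + n) →
    (R.filter (fun A => A.card ≤ t)).card ≤ (F.filter (fun A => A.card ≤ t)).card := by
  intro n
  induction n with
  | zero =>
    intro M F R t hFM hFdc hRM hRinit hRF hbound
    have : F.filter (fun A => A.card ≤ t) = F := by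
      apply filter_true_of_mem
      intro A hA
      simpa using hbound A hA
    rw [this]
    exact le_trans (card_le_card (filter_subset _ _)) hRF
  | succ n ih =>
    intro M F R t hFM hFdc hRM hRinit hRF hbound
    classical
    by_cases hall : ∀ A ∈ F, A.card ≤ t
    · have : F.filter (fun A => A.card ≤ t) = F := filter_true_of_mem hall
      rw [this]
      exact le_trans (card_le_card (filter_subset _ _)) hRF
    push_neg at hall
    obtain ⟨A₀, hA₀F, hA₀c⟩ := hall
    by_contra hcon
    push_neg at hcon
    set M' : Set ℕ := {m | m ∈ M ∧ t < m} with hM'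
    set F' := F.filter (fun A => t < A.card) with hF'
    set R' := R.filter (fun A => t < A.card) with hR'
    have hFsplit : (F.filter (fun A => A.card ≤ t)).card + F'.card = F.card := by
      have h1 := card_filter_add_card_filter_not (s := F) (p := fun A => A.card ≤ t)
      have h2 : F.filter (fun a => ¬ a.card ≤ t) = F' := by
        rw [hF']
        apply filter_congr
        intro A _
        simp [not_le]
      rw [h2] at h1
      exact h1
    have hRsplit : (R.filter (fun A => A.card ≤ t)).card + R'.card = R.card := by
      have h1 := card_filter_add_card_filter_not (s := R) (p := fun A => A.card ≤ t)
      have h2 : R.filter (fun a => ¬ a.card ≤ t) = R' := by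
        rw [hR']
        apply filter_congr
        intro A _
        simp [not_le]
      rw [h2] at h1
      exact h1
    have hcount : R'.card < F'.card := by omega
    have hM'ne : A₀.card ∈ M' := ⟨hFM A₀ hA₀F, hA₀c⟩
    set q := sInf M' with hq
    have hqM' : q ∈ M' := Nat.sInf_mem ⟨A₀.card, hM'ne⟩
    have htq : t < q := hqM'.2
    have hqM : q ∈ M := hqM'.1
    have hqle : ∀ m ∈ M', q ≤ m := fun m hm => Nat.sInf_le hm
    obtain ⟨Astar, hAc, hAR, hAmin⟩ := exists_min_outside M' hqM' (by omega) R
    set Rp := insert Astar R' with hRp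
    have hAR' : Astar ∉ R' := fun h => hAR (mem_filter.mp h).1
    have hRpcard : Rp.card = R'.card + 1 := card_insert_of_notMem hAR'
    have hvalR : ∀ D ∈ R, toColex D < toColex Astar := by
      intro D hD
      rcases lt_trichotomy (toColex D) (toColex Astar) with h | h | h
      · exact h
      · exact absurd (toColex_inj.1 h ▸ hD) hAR
      · exact absurd (hRinit D hD Astar hAc.1 (colexVal_lt_iff.mpr h)) hAR
    -- apply IH
    have hIH := ih M' F' Rp q
      (fun A hA => ⟨hFM A ((mem_filter.mp hA).1), (mem_filter.mp hA).2⟩)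
      (by
        intro A B hB hAB hAM'
        rw [hF', mem_filter] at hB ⊢
        exact ⟨hFdc A B hB.1 hAB hAM'.1, hAM'.2⟩)
      (by
        intro A hA
        rcases mem_insert.mp hA with rfl | hA
        · exact hAc
        · exact ⟨hRM A ((mem_filter.mp hA).1), (mem_filter.mp hA).2⟩)
      (by
        intro A hA B hBM' hBA
        rcases mem_insert.mp hA with rfl | hA
        · have hBR : B ∈ R := by
            by_contra hBR
            exact absurd (hAmin B hBM' hBR) (by omega)
          exact mem_insert_of_mem (mem_filter.mpr ⟨hBR, hBM'.2⟩)
        · have := hRinit A (mem_filter.mp hA).1 B hBM'.1 hBA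
          exact mem_insert_of_mem (mem_filter.mpr ⟨this, hBM'.2⟩))
      (by omega)
      (by
        intro A hA
        have := hbound A (mem_filter.mp hA).1
        omega)
    set Q := Rp.filter (fun A => A.card ≤ q) with hQ
    set P := F'.filter (fun A => A.card ≤ q) with hP
    have hQsized : ∀ A ∈ Q, A.card = q := by
      intro A hA
      rw [hQ, mem_filter] at hA
      have hc : A.card ∈ M' := by
        rcases mem_insert.mp hA.1 with rfl | h
        · exact hAc
        · exact ⟨hRM A (mem_filter.mp h).1, (mem_filter.mp h).2⟩
      exact le_antisymm hA.2 (hqle _ hc)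
    have hPsized : ∀ A ∈ P, A.card = q := by
      intro A hA
      rw [hP, mem_filter] at hA
      have hc : A.card ∈ M' := ⟨hFM A (mem_filter.mp hA.1).1, (mem_filter.mp hA.1).2⟩
      exact le_antisymm hA.2 (hqle _ hc)
    have hQinit : ∀ A ∈ Q, ∀ B : Finset ℕ, B.card = q → toColex B < toColex A → B ∈ Q := by
      intro A hA B hBq hBA
      rw [hQ, mem_filter] at hA ⊢
      refine ⟨?_, le_of_eq hBq⟩
      have hBM' : B.card ∈ M' := by rw [hBq]; exact hqM'
      rcases mem_insert.mp hA.1 with rfl | hA'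
      · have hBR : B ∈ R := by
          by_contra hBR
          have := hAmin B hBM' hBR
          have := colexVal_lt_iff.mpr hBA
          omega
        exact mem_insert_of_mem (mem_filter.mpr ⟨hBR, hBM'.2⟩)
      · have := hRinit A (mem_filter.mp hA').1 B hBM'.1 (colexVal_lt_iff.mpr hBA)
        exact mem_insert_of_mem (mem_filter.mpr ⟨this, hBM'.2⟩)
    set Dset := (Finset.range (t+1)).filter (fun d => d ∈ M) with hDset
    set UQ := Dset.biUnion (fun d => Q.biUnion (fun B => B.powersetCard d)) with hUQ
    set UP := Dset.biUnion (fun d => P.biUnion (fun B => B.powersetCard d)) with hUP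
    -- Claim A : R.filter (card ≤ t) ⊆ UQ
    have claimA : R.filter (fun A => A.card ≤ t) ⊆ UQ := by
      intro D hD
      rw [mem_filter] at hD
      obtain ⟨hDR, hDt⟩ := hD
      have hDM : D.card ∈ M := hRM D hDR
      have hDlt : toColex D < toColex Astar := hvalR D hDR
      have hqAstar : q ≤ Astar.card := hqle _ hAc
      obtain ⟨B, hDB, hBq, hBA⟩ := fill_lemma hDlt (by omega) hqAstar
      have hBRp : B ∈ Rp := by
        rcases eq_or_lt_of_le hBA with he | hl
        · rw [hRp]
          have : B = Astar := toColex_inj.1 he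
          rw [this]; exact mem_insert_self _ _
        · have hBM' : B.card ∈ M' := by rw [hBq]; exact hqM'
          have hBR : B ∈ R := by
            by_contra hBR
            have := hAmin B hBM' hBR
            have := colexVal_lt_iff.mpr hl
            omega
          exact mem_insert_of_mem (mem_filter.mpr ⟨hBR, hBM'.2⟩)
      rw [hUQ, mem_biUnion]
      refine ⟨D.card, ?_, ?_⟩
      · rw [hDset, mem_filter, mem_range]
        exact ⟨by omega, hDM⟩
      · rw [mem_biUnion]
        exact ⟨B, mem_filter.mpr ⟨hBRp, le_of_eq hBq⟩, mem_powersetCard.mpr ⟨hDB, rfl⟩⟩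
    -- Claim B : UP ⊆ F.filter (card ≤ t)
    have claimB : UP ⊆ F.filter (fun A => A.card ≤ t) := by
      intro D hD
      rw [hUP, mem_biUnion] at hD
      obtain ⟨d, hd, hD⟩ := hD
      rw [mem_biUnion] at hD
      obtain ⟨B, hB, hDB⟩ := hD
      rw [mem_powersetCard] at hDB
      rw [hDset, mem_filter, mem_range] at hd
      have hBF : B ∈ F := (mem_filter.mp (mem_filter.mp hB).1).1
      rw [mem_filter]
      constructor
      · exact hFdc D B hBF hDB.1 (by rw [hDB.2]; exact hd.2)
      · rw [hDB.2]; omega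
    -- counting
    have hdisjQ : ∀ d₁ ∈ Dset, ∀ d₂ ∈ Dset, d₁ ≠ d₂ →
        Disjoint (Q.biUnion (fun B => B.powersetCard d₁)) (Q.biUnion (fun B => B.powersetCard d₂)) := by
      intro d₁ _ d₂ _ hne
      rw [disjoint_left]
      intro X h1 h2
      rw [mem_biUnion] at h1 h2
      obtain ⟨B₁, _, hX1⟩ := h1
      obtain ⟨B₂, _, hX2⟩ := h2
      exact hne ((mem_powersetCard.mp hX1).2.symm.trans (mem_powersetCard.mp hX2).2)
    have hdisjP : ∀ d₁ ∈ Dset, ∀ d₂ ∈ Dset, d₁ ≠ d₂ →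
        Disjoint (P.biUnion (fun B => B.powersetCard d₁)) (P.biUnion (fun B => B.powersetCard d₂)) := by
      intro d₁ _ d₂ _ hne
      rw [disjoint_left]
      intro X h1 h2
      rw [mem_biUnion] at h1 h2
      obtain ⟨B₁, _, hX1⟩ := h1
      obtain ⟨B₂, _, hX2⟩ := h2
      exact hne ((mem_powersetCard.mp hX1).2.symm.trans (mem_powersetCard.mp hX2).2)
    have hUQcard : UQ.card = ∑ d ∈ Dset, (Q.biUnion (fun B => B.powersetCard d)).card :=
      card_biUnion hdisjQ
    have hUPcard : UP.card = ∑ d ∈ Dset, (P.biUnion (fun B => B.powersetCard d)).card :=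
      card_biUnion hdisjP
    have hterm : ∀ d ∈ Dset, (Q.biUnion (fun B => B.powersetCard d)).card
        ≤ (P.biUnion (fun B => B.powersetCard d)).card := by
      intro d hd
      rw [hDset, mem_filter, mem_range] at hd
      exact kk_layer (by omega) P Q hPsized hQsized hQinit hIH
    have hfinal : (R.filter (fun A => A.card ≤ t)).card ≤ (F.filter (fun A => A.card ≤ t)).card := by
      calc (R.filter (fun A => A.card ≤ t)).card ≤ UQ.card := card_le_card claimA
        _ = ∑ d ∈ Dset, (Q.biUnion (fun B => B.powersetCard d)).card := hUQcard
        _ ≤ ∑ d ∈ Dset, (P.biUnion (fun B => B.powersetCard d)).card := sum_le_sum hterm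
        _ = UP.card := hUPcard.symm
        _ ≤ (F.filter (fun A => A.card ≤ t)).card := card_le_card claimB
    omega

/-- Weighted Kruskal–Katona for `M`-complexes: the colex initial segment of the
same size minimises the total weight. -/
theorem weighted_katona (M : Set ℕ) (F : Finset (Finset ℕ)) (hFne : F.Nonempty)
    (hFM : ∀ A ∈ F, A.card ∈ M)
    (hFdc : ∀ A : Finset ℕ, ∀ B ∈ F, A ⊆ B → A.card ∈ M → A ∈ F)
    (w : ℕ → ℝ) (hw : ∀ m ∈ M, ∀ m' ∈ M, m ≤ m' → w m' ≤ w m)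
    (R : Finset (Finset ℕ)) (hRcard : R.card = F.card)
    (hRM : ∀ A ∈ R, A.card ∈ M)
    (hRinit : ∀ A ∈ R, ∀ B : Finset ℕ, B.card ∈ M → colexVal B < colexVal A → B ∈ R) :
    ∑ A ∈ R, w A.card ≤ ∑ A ∈ F, w A.card := by
  classical
  set b := (F ∪ R).sup Finset.card with hb
  have hFRne : (F ∪ R).Nonempty := hFne.mono subset_union_left
  obtain ⟨A₁, hA₁, hA₁b⟩ := Finset.exists_mem_eq_sup (F ∪ R) hFRne Finset.card
  have hbM : b ∈ M := by
    rw [hb, hA₁b]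
    rcases mem_union.mp hA₁ with h | h
    · exact hFM _ h
    · exact hRM _ h
  have hFb : ∀ A ∈ F, A.card ≤ b := fun A hA => le_sup (mem_union_left _ hA)
  have hRb : ∀ A ∈ R, A.card ≤ b := fun A hA => le_sup (mem_union_right _ hA)
  -- the interpolated weight function
  set mS : ℕ → ℕ := fun s => sInf {m | m ∈ M ∧ s ≤ m ∧ m ≤ b} with hmS
  have hmS_mem : ∀ s ≤ b, mS s ∈ M ∧ s ≤ mS s ∧ mS s ≤ b := by
    intro s hs
    exact Nat.sInf_mem (⟨b, hbM, hs, le_refl b⟩ : Set.Nonempty {m | m ∈ M ∧ s ≤ m ∧ m ≤ b})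
  have hmS_eq : ∀ a ∈ M, a ≤ b → mS a = a := by
    intro a haM hab
    have hmem : a ∈ {m | m ∈ M ∧ a ≤ m ∧ m ≤ b} := ⟨haM, le_refl a, hab⟩
    exact le_antisymm (Nat.sInf_le hmem) (hmS_mem a hab).2.1
  have hmS_mono : ∀ s s', s ≤ s' → s' ≤ b → mS s ≤ mS s' := by
    intro s s' hss hs'b
    obtain ⟨h1, h2, h3⟩ := hmS_mem s' hs'b
    have hmem : mS s' ∈ {m | m ∈ M ∧ s ≤ m ∧ m ≤ b} := ⟨h1, le_trans hss h2, h3⟩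
    exact Nat.sInf_le hmem
  set W : ℕ → ℝ := fun s => w (mS s) - w b with hW
  have hWanti : ∀ s s', s ≤ s' → s' ≤ b → W s' ≤ W s := by
    intro s s' hss hs'b
    have h1 := hmS_mem s (le_trans hss hs'b)
    have h2 := hmS_mem s' hs'b
    have := hw (mS s) h1.1 (mS s') h2.1 (hmS_mono s s' hss hs'b)
    simp only [hW]
    linarith
  have hWb : W b = 0 := by
    simp only [hW, hmS_eq b hbM (le_refl b), sub_self]
  have hWnonneg : ∀ s ≤ b, 0 ≤ W s := by
    intro s hs
    have := hWanti s b hs (le_refl b)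
    rw [hWb] at this
    linarith
  have hWa : ∀ a ∈ M, a ≤ b → W a = w a - w b := by
    intro a h1 h2
    simp only [hW, hmS_eq a h1 h2]
  -- telescoping
  have htel : ∀ (c a : ℕ), a ≤ c → ∑ s ∈ Finset.Ico a c, (W s - W (s+1)) = W a - W c := by
    intro c a hac
    induction c, hac using Nat.le_induction with
    | base => simp
    | succ m ham ih =>
      rw [Finset.sum_Ico_succ_top (by omega), ih]
      ring
  -- layer cake
  have hlc : ∀ a, a ∈ M → a ≤ b →
      w a = w b + ∑ s ∈ Finset.range b, (if a ≤ s then W s - W (s+1) else 0) := by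
    intro a haM hab
    have h1 : ∑ s ∈ Finset.range b, (if a ≤ s then W s - W (s+1) else 0)
        = ∑ s ∈ Finset.Ico a b, (W s - W (s+1)) := by
      rw [← Finset.sum_filter]
      congr 1
      ext s
      simp only [Finset.mem_filter, Finset.mem_range, Finset.mem_Ico]
      omega
    rw [h1, htel b a hab, hWb, hWa a haM hab]
    ring
  have hsum : ∀ (G : Finset (Finset ℕ)), (∀ A ∈ G, A.card ∈ M) → (∀ A ∈ G, A.card ≤ b) →
      ∑ A ∈ G, w A.card = (G.card : ℝ) * w b
        + ∑ s ∈ Finset.range b, (W s - W (s+1)) * ((G.filter (fun A => A.card ≤ s)).card : ℝ) := by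
    intro G hGM hGb
    have h1 : ∀ A ∈ G, w A.card
        = w b + ∑ s ∈ Finset.range b, (if A.card ≤ s then W s - W (s+1) else 0) :=
      fun A hA => hlc _ (hGM A hA) (hGb A hA)
    rw [Finset.sum_congr rfl h1, Finset.sum_add_distrib, Finset.sum_const, nsmul_eq_mul]
    congr 1
    rw [Finset.sum_comm]
    apply Finset.sum_congr rfl
    intro s _
    rw [← Finset.sum_filter, Finset.sum_const, nsmul_eq_mul]
    ring
  rw [hsum R hRM hRb, hsum F hFM hFb, hRcard]
  apply add_le_add_right
  apply Finset.sum_le_sum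
  intro s hs
  rw [Finset.mem_range] at hs
  have hnn : 0 ≤ W s - W (s+1) := by
    have := hWanti s (s+1) (by omega) (by omega)
    linarith
  have hkey := key_lemma b M F R s hFM hFdc hRM hRinit (le_of_eq hRcard)
    (fun A hA => by have := hFb A hA; omega)
  exact mul_le_mul_of_nonneg_left (by exact_mod_cast hkey) hnn
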